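/- The intersection of the subinjectivity domains of all pure-injective left R-modules equals the class of absolutely pure (fp-injective) left R-modules. -/

import Mathlib

universe u

open LinearMap MulOpposite

/-! Character module -/

/-- The character group `M⁺ = Hom_ℤ(M, ℚ/ℤ)`. -/
abbrev CharMod (M : Type u) [AddCommGroup M] : Type u := M →+ AddCircle (1 : ℚ)

/-- If `M` is a left `S`-module, then `M⁺` is a right `S`-module via `(f • r) m = f (r • m)`. -/
instance CharMod.moduleRight (S : Type u) [Ring S] (M : Type u) [AddCommGroup M]
    [Module S M] : Module Sᵐᵒᵖ (CharMod M) where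
  smul r f := f.comp (DistribMulAction.toAddMonoidHom M (unop r))
  one_smul f := by
    apply AddMonoidHom.ext; intro m
    show f ((unop (1 : Sᵐᵒᵖ)) • m) = f m
    simp
  mul_smul r s f := by
    apply AddMonoidHom.ext; intro m
    show f ((unop (r * s)) • m) = f ((unop s) • ((unop r) • m))
    simp [mul_smul]
  smul_zero r := by apply AddMonoidHom.ext; intro m; rfl
  smul_add r f g := by apply AddMonoidHom.ext; intro m; rfl
  add_smul r s f := by
    apply AddMonoidHom.ext; intro m
    show f ((unop (r + s)) • m) = f ((unop r) • m) + f ((unop s) • m)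
    rw [unop_add, add_smul, map_add]
  zero_smul f := by
    apply AddMonoidHom.ext; intro m
    show f ((unop (0 : Sᵐᵒᵖ)) • m) = 0
    simp

/-- If `M` is a right `S`-module, then `M⁺` is a left `S`-module via `(r • f) m = f (m • r)`. -/
instance CharMod.moduleLeft (S : Type u) [Ring S] (M : Type u) [AddCommGroup M]
    [Module Sᵐᵒᵖ M] : Module S (CharMod M) where
  smul r f := f.comp (DistribMulAction.toAddMonoidHom M (op r))
  one_smul f := by
    apply AddMonoidHom.ext; intro m
    show f ((op (1 : S)) • m) = f m
    simp
  mul_smul r s f := by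
    apply AddMonoidHom.ext; intro m
    show f ((op (r * s)) • m) = f ((op s) • ((op r) • m))
    rw [← mul_smul, ← op_mul]
  smul_zero r := by apply AddMonoidHom.ext; intro m; rfl
  smul_add r f g := by apply AddMonoidHom.ext; intro m; rfl
  add_smul r s f := by
    apply AddMonoidHom.ext; intro m
    show f ((op (r + s)) • m) = f ((op r) • m) + f ((op s) • m)
    rw [op_add, add_smul, map_add]
  zero_smul f := by
    apply AddMonoidHom.ext; intro m
    show f ((op (0 : S)) • m) = 0
    simp

/-! Tensor product of a right module and a left module over a (possibly noncommutative) ring -/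

section Tensor

variable (S : Type u) [Ring S]

/-- The bilinearity relations defining `M ⊗_S N` as a quotient of `M ⊗_ℤ N`. -/
def tensorRel (M N : Type u) [AddCommGroup M] [Module Sᵐᵒᵖ M] [AddCommGroup N] [Module S N] :
    Submodule ℤ (TensorProduct ℤ M N) :=
  Submodule.span ℤ {x | ∃ (m : M) (r : S) (n : N),
    x = (op r • m) ⊗ₜ[ℤ] n - m ⊗ₜ[ℤ] (r • n)}

/-- `M ⊗_S N` for a right `S`-module `M` and a left `S`-module `N`. -/
def RTensor (M N : Type u) [AddCommGroup M] [Module Sᵐᵒᵖ M] [AddCommGroup N] [Module S N] :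
    Type u := TensorProduct ℤ M N ⧸ tensorRel S M N

noncomputable instance (M N : Type u) [AddCommGroup M] [Module Sᵐᵒᵖ M] [AddCommGroup N] [Module S N] :
    AddCommGroup (RTensor S M N) :=
  inferInstanceAs (AddCommGroup (TensorProduct ℤ M N ⧸ tensorRel S M N))

/-- Functoriality of `M ⊗_S -` in the left-module variable. -/
noncomputable def rTensorMap (M : Type u) [AddCommGroup M] [Module Sᵐᵒᵖ M] {N B : Type u}
    [AddCommGroup N] [Module S N] [AddCommGroup B] [Module S B] (g : N →ₗ[S] B) :
    RTensor S M N →ₗ[ℤ] RTensor S M B :=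
  Submodule.mapQ _ _ (TensorProduct.map LinearMap.id g.toAddMonoidHom.toIntLinearMap)
    (by
      rw [tensorRel, Submodule.span_le]
      rintro x ⟨m, r, n, rfl⟩
      exact Submodule.subset_span ⟨m, r, g n, by
        erw [map_sub, TensorProduct.map_tmul, TensorProduct.map_tmul]
        simp only [LinearMap.id_apply, AddMonoidHom.coe_toIntLinearMap,
          LinearMap.toAddMonoidHom_coe, map_smul]⟩)

/-- Functoriality of `- ⊗_S N` in the right-module variable. -/
noncomputable def lTensorMap {M B : Type u} [AddCommGroup M] [Module Sᵐᵒᵖ M] [AddCommGroup B]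
    [Module Sᵐᵒᵖ B] (h : M →ₗ[Sᵐᵒᵖ] B) (N : Type u) [AddCommGroup N] [Module S N] :
    RTensor S M N →ₗ[ℤ] RTensor S B N :=
  Submodule.mapQ _ _ (TensorProduct.map h.toAddMonoidHom.toIntLinearMap LinearMap.id)
    (by
      rw [tensorRel, Submodule.span_le]
      rintro x ⟨m, r, n, rfl⟩
      exact Submodule.subset_span ⟨h m, r, n, by
        erw [map_sub, TensorProduct.map_tmul, TensorProduct.map_tmul]
        simp only [LinearMap.id_apply, AddMonoidHom.coe_toIntLinearMap,
          LinearMap.toAddMonoidHom_coe, map_smul]⟩)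

end Tensor

/-! Basic relative homological notions -/

section Defs

variable (S : Type u) [Ring S]

/-- `M` is `N`-subinjective: every map `N → M` extends along every embedding of `N`. -/
def Subinjective (N M : Type u) [AddCommGroup N] [Module S N] [AddCommGroup M]
    [Module S M] : Prop :=
  ∀ (K : Type u) [AddCommGroup K] [Module S K] (i : N →ₗ[S] K), Function.Injective i →
    ∀ f : N →ₗ[S] M, ∃ h : K →ₗ[S] M, h ∘ₗ i = f

/-- `M` is an injective module. -/
def InjMod (M : Type u) [AddCommGroup M] [Module S M] : Prop :=
  ∀ (N : Type u) [AddCommGroup N] [Module S N], Subinjective S N M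

/-- `M` is `N`-subprojective. -/
def Subprojective (M N : Type u) [AddCommGroup M] [Module S M] [AddCommGroup N]
    [Module S N] : Prop :=
  ∀ (B : Type u) [AddCommGroup B] [Module S B] (g : B →ₗ[S] N), Function.Surjective g →
    ∀ f : M →ₗ[S] N, ∃ h : M →ₗ[S] B, g ∘ₗ h = f

/-- A monomorphism of left `S`-modules is pure if it stays injective after
tensoring with any right `S`-module. -/
def IsPureMono {A B : Type u} [AddCommGroup A] [Module S A] [AddCommGroup B] [Module S B]
    (i : A →ₗ[S] B) : Prop :=
  Function.Injective i ∧
    ∀ (M : Type u) [AddCommGroup M] [Module Sᵐᵒᵖ M], Function.Injective (rTensorMap S M i)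

/-- `N` is absolutely pure (fp-injective): every embedding of `N` is pure. -/
def AbsPure (N : Type u) [AddCommGroup N] [Module S N] : Prop :=
  ∀ (K : Type u) [AddCommGroup K] [Module S K] (i : N →ₗ[S] K), Function.Injective i →
    IsPureMono S i

/-- `N` is absolutely `M`-pure, for a right module `M`. -/
def AbsMPure (M : Type u) [AddCommGroup M] [Module Sᵐᵒᵖ M] (N : Type u) [AddCommGroup N]
    [Module S N] : Prop :=
  ∀ (B : Type u) [AddCommGroup B] [Module S B] (i : N →ₗ[S] B), Function.Injective i →
    Function.Injective (rTensorMap S M i)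

/-- `M` is pure-injective: maps into `M` extend along pure monomorphisms. -/
def PureInjective (M : Type u) [AddCommGroup M] [Module S M] : Prop :=
  ∀ (A B : Type u) [AddCommGroup A] [Module S A] [AddCommGroup B] [Module S B]
    (i : A →ₗ[S] B), IsPureMono S i → ∀ f : A →ₗ[S] M, ∃ h : B →ₗ[S] M, h ∘ₗ i = f

/-- `M` is indigent: its subinjectivity domain is exactly the injective modules. -/
def Indigent (M : Type u) [AddCommGroup M] [Module S M] : Prop :=
  ∀ (N : Type u) [AddCommGroup N] [Module S N], Subinjective S N M ↔ InjMod S N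

/-- `M` is pi-indigent: `M` is pure-injective and its subinjectivity domain is exactly
the absolutely pure modules. -/
def PiIndigent (M : Type u) [AddCommGroup M] [Module S M] : Prop :=
  PureInjective S M ∧
    ∀ (N : Type u) [AddCommGroup N] [Module S N], Subinjective S N M ↔ AbsPure S N

/-- Flatness via the equational criterion. -/
def FlatMod (M : Type u) [AddCommGroup M] [Module S M] : Prop :=
  ∀ (n : ℕ) (r : Fin n → S) (x : Fin n → M), (∑ i, r i • x i) = 0 →
    ∃ (m : ℕ) (a : Fin n → Fin m → S) (y : Fin m → M),
      (∀ i, x i = ∑ j, a i j • y j) ∧ ∀ j, (∑ i, r i * a i j) = 0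

/-- Finitely presented module. -/
def FPMod (M : Type u) [AddCommGroup M] [Module S M] : Prop :=
  ∃ (n : ℕ) (K : Submodule S (Fin n → S)), K.FG ∧
    Nonempty ((((Fin n → S)) ⧸ K) ≃ₗ[S] M)

/-- `Ext¹_S(M, N) = 0`, expressed by the splitting of every extension of `N` by `M`. -/
def ExtVanish (M N : Type u) [AddCommGroup M] [Module S M] [AddCommGroup N] [Module S N] :
    Prop :=
  ∀ (B : Type u) [AddCommGroup B] [Module S B] (i : N →ₗ[S] B) (p : B →ₗ[S] M),
    Function.Injective i → Function.Surjective p → LinearMap.range i = LinearMap.ker p →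
      ∃ s : M →ₗ[S] B, p ∘ₗ s = LinearMap.id

/-- `Tor₁^S(N, T) = 0` for a right module `N` and a left module `T`. -/
def TorVanish (N : Type u) [AddCommGroup N] [Module Sᵐᵒᵖ N] (T : Type u) [AddCommGroup T]
    [Module S T] : Prop :=
  ∀ (P K : Type u) [AddCommGroup P] [Module Sᵐᵒᵖ P] [AddCommGroup K] [Module Sᵐᵒᵖ K]
    (i : K →ₗ[Sᵐᵒᵖ] P) (p : P →ₗ[Sᵐᵒᵖ] N), Module.Projective Sᵐᵒᵖ P →
      Function.Injective i → Function.Surjective p →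
        LinearMap.range i = LinearMap.ker p → Function.Injective (lTensorMap S i T)

/-- `M` is a Whitehead test module for injectivity (i-test). -/
def ITest (M : Type u) [AddCommGroup M] [Module S M] : Prop :=
  ∀ (N : Type u) [AddCommGroup N] [Module S N], ExtVanish S M N → InjMod S N

/-- `S` is (left) n-saturated: `S` is not semisimple and every finitely generated
non-projective module is i-test. -/
def NSaturated : Prop :=
  ¬ IsSemisimpleRing S ∧ ∀ (M : Type u) [AddCommGroup M] [Module S M],
    Module.Finite S M → ¬ Module.Projective S M → ITest S M

/-- A submodule is essential if it intersects every nonzero submodule nontrivially. -/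
def EssentialIn {M : Type u} [AddCommGroup M] [Module S M] (A : Submodule S M) : Prop :=
  ∀ B : Submodule S M, B ≠ ⊥ → A ⊓ B ≠ ⊥

/-- `M` is a singular module: every element is annihilated by an essential left ideal. -/
def SingularMod (M : Type u) [AddCommGroup M] [Module S M] : Prop :=
  ∀ x : M, EssentialIn S (LinearMap.ker (LinearMap.toSpanSingleton S M x))

/-- `S` is (left) nonsingular: `Z(S) = 0`. -/
def NonsingularRing : Prop :=
  ∀ r : S, EssentialIn S (LinearMap.ker (LinearMap.toSpanSingleton S S r)) → r = 0

/-- The socle of a module: the supremum of its simple submodules. -/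
def socle (M : Type u) [AddCommGroup M] [Module S M] : Submodule S M :=
  sSup {N : Submodule S M | IsAtom N}

/-- von Neumann regular ring. -/
def IsVNR : Prop := ∀ a : S, ∃ r : S, a * r * a = a

/-- (left) V-ring: every simple module is injective. -/
def VRing : Prop :=
  ∀ (M : Type u) [AddCommGroup M] [Module S M], IsSimpleModule S M → InjMod S M

/-- (left) hereditary: every left ideal is projective. -/
def HereditaryRing : Prop := ∀ I : Submodule S S, Module.Projective S I

/-- (left) semihereditary: every finitely generated left ideal is projective. -/
def SemihereditaryRing : Prop := ∀ I : Submodule S S, I.FG → Module.Projective S I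

/-- (left) SI-ring: every singular module is injective. -/
def SIRing : Prop :=
  ∀ (M : Type u) [AddCommGroup M] [Module S M], SingularMod S M → InjMod S M

/-- quasi-Frobenius ring: two-sided Noetherian and self-injective. -/
def QFRing : Prop :=
  IsNoetherianRing S ∧ IsNoetherianRing Sᵐᵒᵖ ∧ InjMod S S ∧ InjMod Sᵐᵒᵖ S

/-- A module is uniserial if its submodules are totally ordered. -/
def Uniserial (M : Type u) [AddCommGroup M] [Module S M] : Prop :=
  ∀ A B : Submodule S M, A ≤ B ∨ B ≤ A

/-- (left) serial ring: `S` is a finite direct sum of uniserial left ideals. -/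
def SerialRing : Prop :=
  ∃ (n : ℕ) (f : Fin n → Submodule S S), (∀ i, Uniserial S (f i)) ∧
    iSupIndep f ∧ iSup f = ⊤

/-- (left) coherent: every finitely generated left ideal is finitely presented. -/
def CoherentRing : Prop := ∀ I : Submodule S S, I.FG → FPMod S I

/-- Indecomposable ring: no nontrivial central idempotents. -/
def IndecompRing : Prop :=
  Nontrivial S ∧ ∀ e : S, e * e = e → (∀ r : S, e * r = r * e) → e = 0 ∨ e = 1

end Defs
section ProofAux

variable {S : Type u} [Ring S]

lemma RTensor.mk_rel {M N : Type u} [AddCommGroup M] [Module Sᵐᵒᵖ M] [AddCommGroup N]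
    [Module S N] (m : M) (r : S) (n : N) :
    (Submodule.Quotient.mk ((op r • m) ⊗ₜ[ℤ] n) : RTensor S M N) =
      Submodule.Quotient.mk (m ⊗ₜ[ℤ] (r • n)) := by
  rw [Submodule.Quotient.eq]
  exact Submodule.subset_span ⟨m, r, n, rfl⟩

lemma RTensor.mk_surjective (M N : Type u) [AddCommGroup M] [Module Sᵐᵒᵖ M] [AddCommGroup N]
    [Module S N] : ∀ x : RTensor S M N,
      ∃ y : TensorProduct ℤ M N, (Submodule.Quotient.mk y : RTensor S M N) = x :=
  Submodule.Quotient.mk_surjective _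

lemma rTensorMap_mk {M : Type u} [AddCommGroup M] [Module Sᵐᵒᵖ M] {N B : Type u}
    [AddCommGroup N] [Module S N] [AddCommGroup B] [Module S B] (g : N →ₗ[S] B)
    (m : M) (n : N) :
    rTensorMap S M g (Submodule.Quotient.mk (m ⊗ₜ[ℤ] n)) =
      (Submodule.Quotient.mk (m ⊗ₜ[ℤ] g n) : RTensor S M B) := by
  show Submodule.mapQ _ _ _ _ _ = _
  erw [Submodule.mapQ_apply]
  rfl

noncomputable def liftBalanced {M N : Type u} [AddCommGroup M] [Module Sᵐᵒᵖ M]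
    [AddCommGroup N] [Module S N] (b : M →+ N →+ AddCircle (1 : ℚ))
    (hb : ∀ (m : M) (r : S) (n : N), b (op r • m) n = b m (r • n)) :
    RTensor S M N →ₗ[ℤ] AddCircle (1 : ℚ) :=
  Submodule.liftQ _ (TensorProduct.lift (LinearMap.mk₂ ℤ (fun m n => b m n)
    (by intro m₁ m₂ n; simp) (by intro z m n; simp) (by intro m n₁ n₂; simp)
    (by intro z m n; simp)))
    (by
      rw [tensorRel, Submodule.span_le]
      rintro x ⟨m, r, n, rfl⟩
      exact LinearMap.sub_mem_ker_iff.2 (by erw [TensorProduct.lift.tmul, TensorProduct.lift.tmul]; simp [hb]))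

lemma liftBalanced_mk {M N : Type u} [AddCommGroup M] [Module Sᵐᵒᵖ M]
    [AddCommGroup N] [Module S N] (b : M →+ N →+ AddCircle (1 : ℚ))
    (hb : ∀ (m : M) (r : S) (n : N), b (op r • m) n = b m (r • n)) (m : M) (n : N) :
    liftBalanced b hb (Submodule.Quotient.mk (m ⊗ₜ[ℤ] n)) = b m n := by
  show Submodule.liftQ _ _ _ _ = _
  erw [Submodule.liftQ_apply]

variable (S) in
/-- The evaluation map `N → N⁺⁺`. -/
noncomputable def evChar (N : Type u) [AddCommGroup N] [Module S N] :
    N →ₗ[S] CharMod (CharMod N) where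
  toFun n :=
    { toFun := fun φ => φ n
      map_zero' := rfl
      map_add' := fun φ₁ φ₂ => rfl }
  map_add' n₁ n₂ := by
    apply AddMonoidHom.ext; intro φ
    exact φ.map_add _ _
  map_smul' r n := by
    apply AddMonoidHom.ext; intro φ
    rfl

lemma evChar_injective (N : Type u) [AddCommGroup N] [Module S N] :
    Function.Injective (evChar S N) := by
  intro a b hab
  by_contra hne
  obtain ⟨c, hc⟩ := CharacterModule.exists_character_apply_ne_zero_of_ne_zero
    (sub_ne_zero_of_ne hne)
  apply hc
  have h1 : (c : N →+ AddCircle (1:ℚ)) a = (c : N →+ AddCircle (1:ℚ)) b :=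
    congrArg (fun F : CharMod (CharMod N) => F (c : N →+ AddCircle (1:ℚ))) hab
  show (c : N →+ AddCircle (1:ℚ)) (a - b) = 0
  rw [map_sub, h1, sub_self]

lemma pureInjective_charMod (C : Type u) [AddCommGroup C] [Module Sᵐᵒᵖ C] :
    PureInjective S (CharMod C) := by
  intro A B _ _ _ _ i hi f
  set b : C →+ A →+ AddCircle (1 : ℚ) :=
    { toFun := fun c =>
        { toFun := fun a => f a c
          map_zero' := by show f 0 c = 0; rw [map_zero]; rfl
          map_add' := fun a₁ a₂ => by
            show f (a₁ + a₂) c = f a₁ c + f a₂ c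
            rw [map_add]; rfl }
      map_zero' := by apply AddMonoidHom.ext; intro a; exact (f a).map_zero
      map_add' := fun c₁ c₂ => by apply AddMonoidHom.ext; intro a; exact (f a).map_add _ _ }
    with hbdef
  have hb : ∀ (c : C) (r : S) (a : A), b (op r • c) a = b c (r • a) := by
    intro c r a
    show f a (op r • c) = f (r • a) c
    rw [f.map_smul]; rfl
  set χ : RTensor S C A →ₗ[ℤ] AddCircle (1 : ℚ) := liftBalanced b hb with hχdef
  obtain ⟨ψ, hψ⟩ := CharacterModule.dual_surjective_of_injective (rTensorMap S C i) (hi.2 C)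
    χ.toAddMonoidHom
  have hψ' : ∀ x : RTensor S C A, ψ (rTensorMap S C i x) = χ x := fun x =>
    DFunLike.congr_fun hψ x
  refine ⟨⟨⟨fun b₀ =>
      { toFun := fun c => ψ (Submodule.Quotient.mk (c ⊗ₜ[ℤ] b₀))
        map_zero' := by
          show ψ (Submodule.Quotient.mk ((0 : C) ⊗ₜ[ℤ] b₀)) = 0
          erw [TensorProduct.zero_tmul, Submodule.Quotient.mk_zero, map_zero]
        map_add' := fun c₁ c₂ => by
          show ψ (Submodule.Quotient.mk ((c₁ + c₂) ⊗ₜ[ℤ] b₀)) =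
            ψ (Submodule.Quotient.mk (c₁ ⊗ₜ[ℤ] b₀)) + ψ (Submodule.Quotient.mk (c₂ ⊗ₜ[ℤ] b₀))
          erw [TensorProduct.add_tmul, Submodule.Quotient.mk_add, map_add] },
    fun b₁ b₂ => by
      apply AddMonoidHom.ext; intro c
      show ψ (Submodule.Quotient.mk (c ⊗ₜ[ℤ] (b₁ + b₂))) =
        ψ (Submodule.Quotient.mk (c ⊗ₜ[ℤ] b₁)) + ψ (Submodule.Quotient.mk (c ⊗ₜ[ℤ] b₂))
      erw [TensorProduct.tmul_add, Submodule.Quotient.mk_add, map_add]⟩,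
    fun r b₀ => by
      apply AddMonoidHom.ext; intro c
      show ψ (Submodule.Quotient.mk (c ⊗ₜ[ℤ] (r • b₀))) =
        ψ (Submodule.Quotient.mk ((op r • c) ⊗ₜ[ℤ] b₀))
      rw [RTensor.mk_rel]⟩, ?_⟩
  apply LinearMap.ext; intro a
  apply AddMonoidHom.ext; intro c
  show ψ (Submodule.Quotient.mk (c ⊗ₜ[ℤ] (i a))) = f a c
  erw [← rTensorMap_mk, hψ', hχdef]
  exact liftBalanced_mk b hb c a

end ProofAux
section ProofAux2

variable {S : Type u} [Ring S]

lemma rTensorMap_comp {M : Type u} [AddCommGroup M] [Module Sᵐᵒᵖ M] {A B C' : Type u}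
    [AddCommGroup A] [Module S A] [AddCommGroup B] [Module S B] [AddCommGroup C']
    [Module S C'] (f : A →ₗ[S] B) (g : B →ₗ[S] C') (x : RTensor S M A) :
    rTensorMap S M (g ∘ₗ f) x = rTensorMap S M g (rTensorMap S M f x) := by
  obtain ⟨y, rfl⟩ := RTensor.mk_surjective M A x
  induction y using TensorProduct.induction_on with
  | zero => erw [Submodule.Quotient.mk_zero, map_zero]
  | tmul m a => rw [rTensorMap_mk, rTensorMap_mk, rTensorMap_mk]; rfl
  | add u v ih₁ ih₂ =>
    erw [Submodule.Quotient.mk_add, map_add, map_add, map_add, ih₁, ih₂]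

lemma rTensor_evChar_injective (N : Type u) [AddCommGroup N] [Module S N]
    (M : Type u) [AddCommGroup M] [Module Sᵐᵒᵖ M] :
    Function.Injective (rTensorMap S M (evChar S N)) := by
  rw [injective_iff_map_eq_zero]
  intro x hx
  by_contra hne
  obtain ⟨χ, hχ⟩ := CharacterModule.exists_character_apply_ne_zero_of_ne_zero hne
  -- `g m : N⁺` given by `n ↦ χ (m ⊗ n)`
  set g : M → CharMod N := fun m =>
    { toFun := fun n => χ (Submodule.Quotient.mk (m ⊗ₜ[ℤ] n))
      map_zero' := by
        show χ (Submodule.Quotient.mk (m ⊗ₜ[ℤ] (0 : N))) = 0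
        erw [TensorProduct.tmul_zero, Submodule.Quotient.mk_zero, map_zero]
      map_add' := fun n₁ n₂ => by
        show χ (Submodule.Quotient.mk (m ⊗ₜ[ℤ] (n₁ + n₂))) =
          χ (Submodule.Quotient.mk (m ⊗ₜ[ℤ] n₁)) + χ (Submodule.Quotient.mk (m ⊗ₜ[ℤ] n₂))
        erw [TensorProduct.tmul_add, Submodule.Quotient.mk_add, map_add] } with hgdef
  set b : M →+ CharMod (CharMod N) →+ AddCircle (1 : ℚ) :=
    { toFun := fun m =>
        { toFun := fun F => F (g m)
          map_zero' := rfl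
          map_add' := fun F₁ F₂ => rfl }
      map_zero' := by
        apply AddMonoidHom.ext; intro F
        show F (g 0) = 0
        have hg0 : g 0 = 0 := by
          apply AddMonoidHom.ext; intro n
          show χ (Submodule.Quotient.mk ((0 : M) ⊗ₜ[ℤ] n)) = 0
          erw [TensorProduct.zero_tmul, Submodule.Quotient.mk_zero, map_zero]
        rw [hg0, map_zero]
      map_add' := fun m₁ m₂ => by
        apply AddMonoidHom.ext; intro F
        show F (g (m₁ + m₂)) = F (g m₁) + F (g m₂)
        have hgadd : g (m₁ + m₂) = g m₁ + g m₂ := by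
          apply AddMonoidHom.ext; intro n
          show χ (Submodule.Quotient.mk ((m₁ + m₂) ⊗ₜ[ℤ] n)) =
            χ (Submodule.Quotient.mk (m₁ ⊗ₜ[ℤ] n)) + χ (Submodule.Quotient.mk (m₂ ⊗ₜ[ℤ] n))
          erw [TensorProduct.add_tmul, Submodule.Quotient.mk_add, map_add]
        rw [hgadd, map_add] } with hbdef
  have hb : ∀ (m : M) (r : S) (F : CharMod (CharMod N)), b (op r • m) F = b m (r • F) := by
    intro m r F
    show F (g (op r • m)) = (r • F) (g m)
    have hgr : g (op r • m) = op r • g m := by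
      apply AddMonoidHom.ext; intro n
      show χ (Submodule.Quotient.mk ((op r • m) ⊗ₜ[ℤ] n)) =
        χ (Submodule.Quotient.mk (m ⊗ₜ[ℤ] (r • n)))
      rw [RTensor.mk_rel]
    rw [hgr]; rfl
  have key : ∀ y : RTensor S M N,
      liftBalanced b hb (rTensorMap S M (evChar S N) y) = χ y := by
    intro y
    obtain ⟨z, rfl⟩ := RTensor.mk_surjective M N y
    induction z using TensorProduct.induction_on with
    | zero => erw [Submodule.Quotient.mk_zero, map_zero, map_zero]
    | tmul m n =>
      rw [rTensorMap_mk, liftBalanced_mk]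
      rfl
    | add u v ih₁ ih₂ =>
      erw [Submodule.Quotient.mk_add, map_add, map_add, map_add, ih₁, ih₂]
  apply hχ
  rw [← key x, hx, map_zero]

end ProofAux2
theorem stmt_2 {R : Type u} [Ring R] (N : Type u) [AddCommGroup N] [Module R N] :
    (∀ (M : Type u) [AddCommGroup M] [Module R M], PureInjective R M →
      Subinjective R N M) ↔ AbsPure R N := by
  constructor
  · intro h K _ _ i hi
    refine ⟨hi, fun M _ _ => ?_⟩
    obtain ⟨h', hh'⟩ := h (CharMod (CharMod N)) (pureInjective_charMod (CharMod N))
      K i hi (evChar R N)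
    intro x y hxy
    apply rTensor_evChar_injective N M
    have h1 : rTensorMap R M (evChar R N) x = rTensorMap R M (h' ∘ₗ i) x := by rw [hh']
    have h2 : rTensorMap R M (evChar R N) y = rTensorMap R M (h' ∘ₗ i) y := by rw [hh']
    rw [h1, h2, rTensorMap_comp, rTensorMap_comp, hxy]
  · intro habs M _ _ hM K _ _ i hi f
    exact hM N K i (habs K i hi) f
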